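/- The multinomial identity of Appendix A: let a : Fin 10 → ℕ with a 0 ≥ 1 (index 0 representing the ace), and let t = ∑ k, a k with t ≥ 2. Then, working in ℚ, the sum over all k ≠ 0 with a k ≥ 1 of the term ((t − 2)! / ((a 0 − 1)! * (a k − 1)! * ∏_{j ∉ {0, k}} (a j)!)), multiplied by (∏ j, (a j)!) / t!, equals (a 0 * (t − a 0)) / (t * (t − 1)). (This counts the permutations of the unknown cards whose first card is an ace and whose last card is a non-ace, as a fraction of all permutations of the multiset.) -/
import Mathlib


open Finset Nat

/-- The multinomial identity of Appendix A: with `a 0 ≥ 1` aces among `t = ∑ k, a k ≥ 2`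
cards, the fraction of permutations of the multiset whose first card is an ace and
whose last card is a non-ace equals `a 0 * (t − a 0) / (t * (t − 1))`. -/
theorem appendixA_multinomial_identity
    (a : Fin 10 → ℕ) (ha : 1 ≤ a 0) (t : ℕ) (htsum : t = ∑ k, a k) (ht : 2 ≤ t) :
    (∑ k ∈ Finset.univ.filter (fun k : Fin 10 => k ≠ 0 ∧ 1 ≤ a k),
        (((t - 2)! : ℚ)
          / (((a 0 - 1)! : ℚ) * ((a k - 1)! : ℚ)
              * ∏ j ∈ Finset.univ.filter (fun j : Fin 10 => j ≠ 0 ∧ j ≠ k),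
                  ((a j)! : ℚ))))
      * ((∏ j, ((a j)! : ℚ)) / (t ! : ℚ))
    = ((a 0 : ℚ) * ((t - a 0 : ℕ) : ℚ)) / ((t : ℚ) * ((t - 1 : ℕ) : ℚ)) := by
  have htfact : (t ! : ℚ) = (t : ℚ) * ((t - 1 : ℕ) : ℚ) * ((t - 2)! : ℚ) := by
    have h1 : t * ((t - 1) * (t - 2)!) = t ! := by
      calc t * ((t - 1) * (t - 2)!) = t * (t - 1)! := by
            rw [show t - 2 = (t - 1) - 1 by omega, Nat.mul_factorial_pred (by omega)]
        _ = t ! := Nat.mul_factorial_pred (by omega)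
    rw [← h1]; push_cast; ring
  have ha0fact : ((a 0)! : ℚ) = (a 0 : ℚ) * ((a 0 - 1)! : ℚ) := by
    rw [← Nat.mul_factorial_pred (by omega)]; push_cast; ring
  have hterm : ∀ k ∈ Finset.univ.filter (fun k : Fin 10 => k ≠ 0 ∧ 1 ≤ a k),
      (((t - 2)! : ℚ)
          / (((a 0 - 1)! : ℚ) * ((a k - 1)! : ℚ)
              * ∏ j ∈ Finset.univ.filter (fun j : Fin 10 => j ≠ 0 ∧ j ≠ k),
                  ((a j)! : ℚ)))
        * ((∏ j, ((a j)! : ℚ)) / (t ! : ℚ))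
      = (a 0 : ℚ) * (a k : ℚ) / ((t : ℚ) * ((t - 1 : ℕ) : ℚ)) := by
    intro k hk
    simp only [Finset.mem_filter, Finset.mem_univ, true_and] at hk
    obtain ⟨hk0, hak⟩ := hk
    have hakfact : ((a k)! : ℚ) = (a k : ℚ) * ((a k - 1)! : ℚ) := by
      rw [← Nat.mul_factorial_pred (by omega)]; push_cast; ring
    have hsplit : ∏ j, ((a j)! : ℚ)
        = ((a 0)! : ℚ) * ((a k)! : ℚ)
          * ∏ j ∈ Finset.univ.filter (fun j : Fin 10 => j ≠ 0 ∧ j ≠ k), ((a j)! : ℚ) := by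
      rw [← Finset.prod_filter_mul_prod_filter_not Finset.univ
        (fun j : Fin 10 => j = 0 ∨ j = k) (fun j => ((a j)! : ℚ))]
      have e1 : Finset.univ.filter (fun j : Fin 10 => j = 0 ∨ j = k) = {0, k} := by
        ext j; simp
      have e2 : Finset.univ.filter (fun j : Fin 10 => ¬(j = 0 ∨ j = k))
          = Finset.univ.filter (fun j : Fin 10 => j ≠ 0 ∧ j ≠ k) := by
        apply Finset.filter_congr; intro j _; simp [not_or]
      rw [e1, e2, Finset.prod_pair (Ne.symm hk0)]
    rw [hsplit, htfact, ha0fact, hakfact]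
    have hQ : (∏ j ∈ Finset.univ.filter (fun j : Fin 10 => j ≠ 0 ∧ j ≠ k), ((a j)! : ℚ)) ≠ 0 :=
      Finset.prod_ne_zero_iff.mpr (fun j _ => by positivity)
    have h1 : ((a 0 - 1)! : ℚ) ≠ 0 := by positivity
    have h2 : ((a k - 1)! : ℚ) ≠ 0 := by positivity
    have h3 : ((t - 2)! : ℚ) ≠ 0 := by positivity
    have h4 : (t : ℚ) ≠ 0 := by positivity
    have h5 : ((t - 1 : ℕ) : ℚ) ≠ 0 := by
      have : 0 < t - 1 := by omega
      positivity
    rw [div_mul_div_comm (α := ℚ), div_eq_div_iff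
      (mul_ne_zero (mul_ne_zero (mul_ne_zero h1 h2) hQ)
        (mul_ne_zero (mul_ne_zero h4 h5) h3))
      (mul_ne_zero h4 h5)]
    ring
  rw [Finset.sum_mul, Finset.sum_congr rfl hterm]
  have hsumnat : ∑ k ∈ Finset.univ.filter (fun k : Fin 10 => k ≠ 0 ∧ 1 ≤ a k), a k
      = t - a 0 := by
    have hsub : ∑ k ∈ Finset.univ.filter (fun k : Fin 10 => k ≠ 0 ∧ 1 ≤ a k), a k
        = ∑ k ∈ Finset.univ.filter (fun k : Fin 10 => k ≠ 0), a k := by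
      apply Finset.sum_subset
      · intro x hx; simp only [Finset.mem_filter, Finset.mem_univ, true_and] at *
        exact hx.1
      · intro x _ hx
        simp only [Finset.mem_filter, Finset.mem_univ, true_and, not_and, not_le] at hx
        by_cases h : x = 0
        · simp [h] at *
        · omega
    rw [hsub, Finset.filter_ne', ← Finset.add_sum_erase Finset.univ a (Finset.mem_univ 0)]
      at *
    omega
  have hsumQ : ∑ k ∈ Finset.univ.filter (fun k : Fin 10 => k ≠ 0 ∧ 1 ≤ a k), (a k : ℚ)
      = ((t - a 0 : ℕ) : ℚ) := by
    rw [← hsumnat]; push_cast; rfl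
  rw [show (∑ k ∈ Finset.univ.filter (fun k : Fin 10 => k ≠ 0 ∧ 1 ≤ a k),
      (a 0 : ℚ) * (a k : ℚ) / ((t : ℚ) * ((t - 1 : ℕ) : ℚ)))
    = (a 0 : ℚ) * (∑ k ∈ Finset.univ.filter (fun k : Fin 10 => k ≠ 0 ∧ 1 ≤ a k), (a k : ℚ))
        / ((t : ℚ) * ((t - 1 : ℕ) : ℚ)) by
      rw [Finset.mul_sum, Finset.sum_div]]
  rw [hsumQ]
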